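/- Let x₁, …, x_t be vectors in ℝ^d with ‖x_s‖ ≤ 1 for all s, and λ > 0. Then det(λI + Σ_{s=1}^t x_s x_sᵀ) ≤ (λ + t/d)^d. -/

import Mathlib

open Matrix

private lemma vecMulVec_posSemidef {d : ℕ} (a : Fin d → ℝ) :
    (vecMulVec a a).PosSemidef := by
  rw [posSemidef_iff_dotProduct_mulVec]
  constructor
  · ext i j
    simp [vecMulVec, conjTranspose_apply, mul_comm]
  · intro y
    have : star y ⬝ᵥ (vecMulVec a a *ᵥ y) = (a ⬝ᵥ y) * (a ⬝ᵥ y) := by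
      simp only [dotProduct, mulVec, vecMulVec, Pi.star_apply, star_trivial, of_apply,
        Finset.mul_sum, Finset.sum_mul]
      rw [Finset.sum_comm]
      apply Finset.sum_congr rfl
      intro i _
      apply Finset.sum_congr rfl
      intro j _
      ring
    rw [this]
    exact mul_self_nonneg _

private lemma sum_vecMulVec_posSemidef {d t : ℕ} (x : Fin t → (Fin d → ℝ)) :
    (∑ s, vecMulVec (x s) (x s)).PosSemidef := by
  apply Finset.sum_induction _ Matrix.PosSemidef
  · exact fun _ _ h1 h2 => h1.add h2
  · exact Matrix.PosSemidef.zero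
  · exact fun s _ => vecMulVec_posSemidef (x s)

private lemma smul_one_posDef {d : ℕ} (lam : ℝ) (hlam : 0 < lam) :
    (lam • (1 : Matrix (Fin d) (Fin d) ℝ)).PosDef := by
  rw [smul_one_eq_diagonal]
  exact Matrix.posDef_diagonal_iff.mpr fun _ => hlam

/-- Trace equals sum of eigenvalues for a real symmetric matrix. -/
private lemma trace_eq_sum_eigenvalues {d : ℕ} {A : Matrix (Fin d) (Fin d) ℝ}
    (hA : A.IsHermitian) : A.trace = ∑ i, hA.eigenvalues i := by
  exact hA.trace_eq_sum_eigenvalues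

/-- AM-GM: product over `Fin d` is at most `(sum / d) ^ d`. -/
private lemma prod_le_pow_sum_div {d : ℕ} (hd : 0 < d) (z : Fin d → ℝ)
    (hz : ∀ i, 0 ≤ z i) : ∏ i, z i ≤ ((∑ i, z i) / d) ^ d := by
  have hdR : (0:ℝ) < d := Nat.cast_pos.mpr hd
  set c : ℝ := (d : ℝ)⁻¹ with hc
  have hcd : c * d = 1 := inv_mul_cancel₀ (ne_of_gt hdR)
  have key : ∏ i, z i ^ c ≤ ∑ i, c * z i :=
    Real.geom_mean_le_arith_mean_weighted Finset.univ (fun _ => c) z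
      (fun _ _ => le_of_lt (inv_pos.mpr hdR))
      (by simp [hc, Finset.card_univ, mul_inv_cancel₀ (ne_of_gt hdR)])
      (fun i _ => hz i)
  have hsum : ∑ i, c * z i = (∑ i, z i) / d := by
    rw [← Finset.mul_sum, hc, inv_mul_eq_div]
  have hprod : (∏ i, z i ^ c) ^ d = ∏ i, z i := by
    rw [← Finset.prod_pow]
    apply Finset.prod_congr rfl
    intro i _
    rw [← Real.rpow_natCast (z i ^ c) d, ← Real.rpow_mul (hz i), hcd, Real.rpow_one]
  calc ∏ i, z i = (∏ i, z i ^ c) ^ d := hprod.symm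
    _ ≤ (∑ i, c * z i) ^ d := by
        apply pow_le_pow_left₀ _ key
        exact Finset.prod_nonneg fun i _ => Real.rpow_nonneg (hz i) _
    _ = ((∑ i, z i) / d) ^ d := by rw [hsum]

theorem det_regularized_design_le {d t : ℕ} (hd : 0 < d) (lam : ℝ) (hlam : 0 < lam)
    (x : Fin t → (Fin d → ℝ)) (hx : ∀ s, ∑ i, (x s i) ^ 2 ≤ 1) :
    (lam • (1 : Matrix (Fin d) (Fin d) ℝ) + ∑ s, vecMulVec (x s) (x s)).det
      ≤ (lam + t / d) ^ d := by
  have hdR : (0:ℝ) < d := Nat.cast_pos.mpr hd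
  set M : Matrix (Fin d) (Fin d) ℝ :=
    lam • (1 : Matrix (Fin d) (Fin d) ℝ) + ∑ s, vecMulVec (x s) (x s) with hM
  have hMpd : M.PosDef :=
    (smul_one_posDef lam hlam).add_posSemidef (sum_vecMulVec_posSemidef x)
  have hMh : M.IsHermitian := hMpd.isHermitian
  -- trace bound
  have htr : M.trace ≤ d * lam + t := by
    have h1 : (lam • (1 : Matrix (Fin d) (Fin d) ℝ)).trace = d * lam := by
      simp [Matrix.trace_smul, Matrix.trace_one, mul_comm]
    have h2 : (∑ s, vecMulVec (x s) (x s)).trace ≤ t := by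
      rw [Matrix.trace_sum]
      calc ∑ s, (vecMulVec (x s) (x s)).trace
          = ∑ s : Fin t, ∑ i, (x s i) ^ 2 := by
            apply Finset.sum_congr rfl
            intro s _
            simp [Matrix.trace, Matrix.diag, vecMulVec, sq]
        _ ≤ ∑ _s : Fin t, (1:ℝ) := Finset.sum_le_sum fun s _ => hx s
        _ = t := by simp
    rw [hM, Matrix.trace_add, h1]
    linarith
  -- det = product of eigenvalues
  have hdet : M.det = ∏ i, hMh.eigenvalues i := by
    have := hMh.det_eq_prod_eigenvalues
    simpa using this
  have hev : ∀ i, 0 ≤ hMh.eigenvalues i := fun i => le_of_lt (hMpd.eigenvalues_pos i)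
  have htr' : M.trace = ∑ i, hMh.eigenvalues i := trace_eq_sum_eigenvalues hMh
  calc M.det = ∏ i, hMh.eigenvalues i := hdet
    _ ≤ ((∑ i, hMh.eigenvalues i) / d) ^ d := prod_le_pow_sum_div hd _ hev
    _ ≤ (lam + t / d) ^ d := by
        apply pow_le_pow_left₀
        · exact div_nonneg (Finset.sum_nonneg fun i _ => hev i) (le_of_lt hdR)
        · rw [← htr']
          rw [div_le_iff₀ hdR]
          calc M.trace ≤ d * lam + t := htr
            _ = (lam + t / d) * d := by field_simp
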